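/- Let q be a prime power and n ≥ 1 with gcd(n,q) = 1. For every nonzero f ∈ R(F_q,n) = F_q[X]/(X^n−1), the ideal C(f) generated by f satisfies d(C(f)) · dim_{F_q} C(f) ≥ n. -/

import Mathlib

open Polynomial

/-- The ring R(F,n) = F[X]/(X^n - 1). -/
abbrev CycRing (F : Type*) [Field F] (n : ℕ) := AdjoinRoot (X ^ n - Polynomial.C (1 : F))

/-- The unique representative of degree < n of an element of F[X]/(X^n-1). -/
noncomputable def cycRep {F : Type*} [Field F] {n : ℕ} (f : CycRing F n) : F[X] :=
  if h : n = 0 then 0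
  else AdjoinRoot.modByMonicHom (monic_X_pow_sub_C (1 : F) h) f

/-- Hamming weight of an element of F[X]/(X^n-1): the number of nonzero coefficients of
its representative of degree < n. -/
noncomputable def cycWt {F : Type*} [Field F] {n : ℕ} (f : CycRing F n) : ℕ :=
  (cycRep f).support.card

/-- Minimum distance of a cyclic code (ideal of F[X]/(X^n-1)). -/
noncomputable def cycDist {F : Type*} [Field F] {n : ℕ} (I : Ideal (CycRing F n)) : ℕ :=
  sInf {w | ∃ f ∈ I, f ≠ 0 ∧ cycWt f = w}

/-- Dimension of a cyclic code as an F-vector space. -/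
noncomputable def cycDim (F : Type*) [Field F] {n : ℕ} (I : Ideal (CycRing F n)) : ℕ :=
  Module.finrank F (Submodule.restrictScalars F I)

section NaiveUP

variable {F : Type*} [Field F] {n : ℕ}


noncomputable def coeffZ (c : CycRing F n) (j : ZMod n) : F := (cycRep c).coeff j.val

lemma cycRep_mk (hn : n ≠ 0) (g : F[X]) :
    cycRep (AdjoinRoot.mk (X ^ n - C (1 : F)) g) = g %ₘ (X ^ n - C (1 : F)) := by
  rw [cycRep, dif_neg hn, AdjoinRoot.modByMonicHom_mk]

lemma degree_cycRep_lt (hn : n ≠ 0) (c : CycRing F n) : (cycRep c).degree < n := by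
  obtain ⟨g, rfl⟩ := AdjoinRoot.mk_surjective c
  rw [cycRep_mk hn]
  have := degree_modByMonic_lt g (monic_X_pow_sub_C (1 : F) hn)
  rwa [degree_X_pow_sub_C (Nat.pos_of_ne_zero hn)] at this

lemma mk_cycRep (hn : n ≠ 0) (c : CycRing F n) :
    AdjoinRoot.mk (X ^ n - C (1 : F)) (cycRep c) = c := by
  rw [cycRep, dif_neg hn]
  exact AdjoinRoot.mk_leftInverse (monic_X_pow_sub_C (1 : F) hn) c

lemma cycRep_eq_zero_iff (hn : n ≠ 0) (c : CycRing F n) : cycRep c = 0 ↔ c = 0 := by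
  constructor
  · intro h
    have h2 := mk_cycRep hn c
    rw [h, map_zero] at h2
    exact h2.symm
  · rintro rfl
    rw [cycRep, dif_neg hn, map_zero]

-- coefficient of C a * (X^n - 1)
lemma coeffCp (a : F) (k : ℕ) :
    (C a * (X ^ n - C (1:F))).coeff k
      = a * (if k = n then (1:F) else 0) - a * (if k = 0 then (1:F) else 0) := by
  rw [mul_sub, coeff_sub, coeff_C_mul, coeff_C_mul, coeff_X_pow, coeff_C]

-- key modByMonic computation
lemma Xmul_modByMonic (hn : n ≠ 0) (g : F[X]) (hg : g.degree < n) :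
    (X * g) %ₘ (X ^ n - C (1 : F)) = X * g - C (g.coeff (n - 1)) * (X ^ n - C (1 : F)) := by
  set α := g.coeff (n - 1) with hα
  refine (div_modByMonic_unique (C α) _ (monic_X_pow_sub_C (1 : F) hn) ⟨by ring, ?_⟩).2
  rw [degree_X_pow_sub_C (Nat.pos_of_ne_zero hn)]
  rw [degree_lt_iff_coeff_zero]
  intro m hm
  have h1 : m = (m - 1) + 1 :=
    (Nat.succ_pred_eq_of_pos (Nat.lt_of_lt_of_le (Nat.pos_of_ne_zero hn) hm)).symm
  have hXg : (X * g).coeff m = g.coeff (m - 1) := by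
    conv_lhs => rw [h1, coeff_X_mul]
  rw [coeff_sub, hXg, coeffCp]
  rcases eq_or_lt_of_le hm with h | h
  · rw [if_pos h.symm, if_neg (by omega : m ≠ 0), ← h, hα]
    ring
  · have : g.coeff (m - 1) = 0 := by
      apply coeff_eq_zero_of_degree_lt
      calc g.degree < (n : WithBot ℕ) := hg
        _ ≤ ((m - 1 : ℕ) : WithBot ℕ) := by exact_mod_cast Nat.le_sub_one_of_lt h
    rw [this, if_neg (by omega : m ≠ n), if_neg (by omega : m ≠ 0)]
    ring

lemma coeffZ_root_mul (hn : n ≠ 0) (c : CycRing F n) (j : ZMod n) :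
    coeffZ (AdjoinRoot.root (X ^ n - C (1:F)) * c) (j + 1) = coeffZ c j := by
  haveI : NeZero n := ⟨hn⟩
  set g := cycRep c with hg
  have hgd : g.degree < n := degree_cycRep_lt hn c
  have hmul : AdjoinRoot.root (X ^ n - C (1:F)) * c
      = AdjoinRoot.mk (X ^ n - C (1 : F)) (X * g) := by
    rw [map_mul, ← AdjoinRoot.mk_X, mk_cycRep hn]
  have hrep : cycRep (AdjoinRoot.root (X ^ n - C (1:F)) * c)
      = X * g - C (g.coeff (n - 1)) * (X ^ n - C (1 : F)) := by
    rw [hmul, cycRep_mk hn, Xmul_modByMonic hn g hgd]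
  have hval : (j + 1).val = (j.val + 1) % n := by
    rw [ZMod.val_add, ZMod.val_one_eq_one_mod]
    conv_rhs => rw [Nat.add_mod]
    rw [Nat.mod_eq_of_lt j.val_lt]
  unfold coeffZ
  rw [hrep, ← hg, hval]
  rcases Nat.lt_or_ge (j.val + 1) n with h | h
  · rw [Nat.mod_eq_of_lt h, coeff_sub, coeff_X_mul, coeffCp,
      if_neg h.ne, if_neg (Nat.succ_ne_zero _)]
    ring
  · have hje : j.val + 1 = n := Nat.le_antisymm (Nat.succ_le_of_lt j.val_lt) h
    have hj1 : j.val = n - 1 := by omega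
    rw [hje, Nat.mod_self, coeff_sub, mul_coeff_zero, coeff_X_zero, zero_mul, coeffCp,
      if_neg (by omega : (0:ℕ) ≠ n), if_pos rfl, hj1]
    ring

lemma coeffZ_root_pow_mul (hn : n ≠ 0) (c : CycRing F n) (i : ℕ) (j : ZMod n) :
    coeffZ ((AdjoinRoot.root (X ^ n - C (1:F))) ^ i * c) (j + (i : ZMod n)) = coeffZ c j := by
  induction i generalizing j with
  | zero => simp
  | succ k ih =>
    have : ((AdjoinRoot.root (X ^ n - C (1:F))) ^ (k+1)) * c
        = AdjoinRoot.root (X ^ n - C (1:F)) * ((AdjoinRoot.root (X ^ n - C (1:F))) ^ k * c) := by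
      ring
    rw [this]
    have hcast : ((k + 1 : ℕ) : ZMod n) = (k : ZMod n) + 1 := by push_cast; ring
    rw [hcast, ← add_assoc, coeffZ_root_mul hn, ih]

noncomputable def suppZ (c : CycRing F n) : Finset (ZMod n) :=
  (cycRep c).support.image (Nat.cast)

lemma mem_suppZ (hn : n ≠ 0) (c : CycRing F n) (j : ZMod n) :
    j ∈ suppZ c ↔ coeffZ c j ≠ 0 := by
  haveI : NeZero n := ⟨hn⟩
  unfold suppZ coeffZ
  constructor
  · rintro hj
    obtain ⟨k, hk, rfl⟩ := Finset.mem_image.mp hj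
    have hklt : k < n := by
      have h1 : (k : WithBot ℕ) ≤ (cycRep c).degree := le_degree_of_mem_supp k hk
      have h2 := degree_cycRep_lt hn c
      exact_mod_cast lt_of_le_of_lt h1 h2
    rw [ZMod.val_cast_of_lt hklt]
    exact mem_support_iff.mp hk
  · intro hj
    refine Finset.mem_image.mpr ⟨j.val, mem_support_iff.mpr hj, ?_⟩
    exact ZMod.natCast_rightInverse j

lemma card_suppZ (hn : n ≠ 0) (c : CycRing F n) : (suppZ c).card = (cycRep c).support.card := by
  haveI : NeZero n := ⟨hn⟩
  apply Finset.card_image_of_injOn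
  intro a ha b hb hab
  have hda := le_degree_of_mem_supp a ha
  have hdb := le_degree_of_mem_supp b hb
  have hlt := degree_cycRep_lt hn c
  have ha' : a < n := by exact_mod_cast lt_of_le_of_lt hda hlt
  have hb' : b < n := by exact_mod_cast lt_of_le_of_lt hdb hlt
  have := congrArg ZMod.val hab
  rwa [ZMod.val_cast_of_lt ha', ZMod.val_cast_of_lt hb'] at this

lemma suppZ_shift (hn : n ≠ 0) (c : CycRing F n) (i : ℕ) :
    suppZ ((AdjoinRoot.root (X ^ n - C (1:F))) ^ i * c)
      = (suppZ c).image (· + (i : ZMod n)) := by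
  ext j
  rw [mem_suppZ hn]
  constructor
  · intro hj
    refine Finset.mem_image.mpr ⟨j - (i : ZMod n), ?_, by ring⟩
    rw [mem_suppZ hn]
    rw [← coeffZ_root_pow_mul hn c i (j - (i : ZMod n)), sub_add_cancel]
    exact hj
  · intro hj
    obtain ⟨x, hx, rfl⟩ := Finset.mem_image.mp hj
    rw [coeffZ_root_pow_mul hn]
    exact (mem_suppZ hn c x).mp hx

/-- coeffZ as a linear map. -/
noncomputable def coeffZL (hn : n ≠ 0) (j : ZMod n) : CycRing F n →ₗ[F] F :=
  (Polynomial.lcoeff F j.val).comp (AdjoinRoot.modByMonicHom (monic_X_pow_sub_C (1 : F) hn))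

lemma coeffZL_apply (hn : n ≠ 0) (j : ZMod n) (c : CycRing F n) :
    coeffZL hn j c = coeffZ c j := by
  unfold coeffZL coeffZ cycRep
  rw [dif_neg hn]
  rfl

lemma greedy (hn : n ≠ 0) (I : Ideal (CycRing F n)) (c : CycRing F n) (hc : c ∈ I)
    (hc0 : c ≠ 0) (U : Finset (ZMod n)) :
    ∃ (m : ℕ) (u : Fin m → CycRing F n) (j : Fin m → ZMod n),
      (∀ t, u t ∈ I) ∧ (∀ t, coeffZ (u t) (j t) ≠ 0) ∧
      (∀ s t : Fin m, s < t → coeffZ (u s) (j t) = 0) ∧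
      (∀ t, j t ∈ U) ∧ U.card ≤ m * (cycRep c).support.card := by
  classical
  haveI : NeZero n := ⟨hn⟩
  induction U using Finset.strongInduction with
  | _ U ih =>
    rcases U.eq_empty_or_nonempty with rfl | ⟨j0, hj0⟩
    · exact ⟨0, Fin.elim0, Fin.elim0, fun t => t.elim0, fun t => t.elim0,
        fun s t _ => t.elim0, fun t => t.elim0, by simp⟩
    · have hsupp : (suppZ c).Nonempty := by
        have hcr : cycRep c ≠ 0 := fun h => hc0 ((cycRep_eq_zero_iff hn c).mp h)
        obtain ⟨k, hk⟩ := nonempty_support_iff.mpr hcr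
        exact ⟨(k : ZMod n), Finset.mem_image.mpr ⟨k, hk, rfl⟩⟩
      obtain ⟨s0, hs0⟩ := hsupp
      set i : ℕ := (j0 - s0).val with hi
      set u0 := (AdjoinRoot.root (X ^ n - C (1:F))) ^ i * c with hu0
      have hcast : (i : ZMod n) = j0 - s0 := ZMod.natCast_rightInverse _
      have hu0j0 : coeffZ u0 j0 ≠ 0 := by
        have hkey := coeffZ_root_pow_mul hn c i s0
        rw [hcast] at hkey
        have he : s0 + (j0 - s0) = j0 := by ring
        rw [he, ← hu0] at hkey
        rw [hkey]
        exact (mem_suppZ hn c s0).mp hs0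
      have hj0supp : j0 ∈ suppZ u0 := (mem_suppZ hn u0 j0).mpr hu0j0
      set U' := U \ suppZ u0 with hU'
      have hss : U' ⊂ U := by
        refine (Finset.ssubset_iff_of_subset (Finset.sdiff_subset)).mpr ⟨j0, hj0, ?_⟩
        simp [hU', hj0supp]
      obtain ⟨m', u', j', h1, h2, h3, h4, h5⟩ := ih U' hss
      refine ⟨m' + 1, Fin.cons u0 u', Fin.cons j0 j', ?_, ?_, ?_, ?_, ?_⟩
      · intro t
        refine Fin.cases ?_ ?_ t
        · rw [Fin.cons_zero, hu0]; exact Ideal.mul_mem_left I _ hc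
        · intro s; rw [Fin.cons_succ]; exact h1 s
      · intro t
        refine Fin.cases ?_ ?_ t
        · rw [Fin.cons_zero, Fin.cons_zero]; exact hu0j0
        · intro s; rw [Fin.cons_succ, Fin.cons_succ]; exact h2 s
      · intro s t hst
        rcases Fin.eq_zero_or_eq_succ t with rfl | ⟨t', rfl⟩
        · exact absurd hst (Fin.not_lt_zero s)
        · rcases Fin.eq_zero_or_eq_succ s with rfl | ⟨s', rfl⟩
          · rw [Fin.cons_zero, Fin.cons_succ]
            have hmem := h4 t'
            rw [hU', Finset.mem_sdiff] at hmem
            exact not_not.mp (fun hne => hmem.2 ((mem_suppZ hn u0 (j' t')).mpr hne))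
          · rw [Fin.cons_succ, Fin.cons_succ]
            exact h3 s' t' (Fin.succ_lt_succ_iff.mp hst)
      · intro t
        refine Fin.cases ?_ ?_ t
        · rw [Fin.cons_zero]; exact hj0
        · intro s; rw [Fin.cons_succ]
          exact Finset.sdiff_subset (h4 s)
      · have hsub : U ⊆ U' ∪ suppZ u0 := by
          intro x hx
          by_cases hx2 : x ∈ suppZ u0
          · exact Finset.mem_union_right _ hx2
          · exact Finset.mem_union_left _ (Finset.mem_sdiff.mpr ⟨hx, hx2⟩)
        have hc1 : (suppZ u0).card = (cycRep c).support.card := by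
          rw [hu0, suppZ_shift hn, Finset.card_image_of_injective _ (add_left_injective _),
            card_suppZ hn]
        calc U.card ≤ (U' ∪ suppZ u0).card := Finset.card_le_card hsub
          _ ≤ U'.card + (suppZ u0).card := Finset.card_union_le _ _
          _ ≤ m' * (cycRep c).support.card + (cycRep c).support.card := by
              rw [hc1]; exact Nat.add_le_add_right h5 _
          _ = (m' + 1) * (cycRep c).support.card := by ring


end NaiveUP

/-- For every nonzero f in R(F_q,n) with gcd(n,q)=1, the ideal C(f) generated by f
satisfies d(C(f)) · dim C(f) ≥ n. -/
theorem naive_UP_cyclic_codes (q n : ℕ) (F : Type*) [Field F] [Fintype F]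
    (hq : Fintype.card F = q) (hn : 1 ≤ n) (hcop : Nat.Coprime n q)
    (f : CycRing F n) (hf : f ≠ 0) :
    n ≤ cycDist (Ideal.span {f}) * cycDim F (Ideal.span {f}) := by
  classical
  have hn0 : n ≠ 0 := by omega
  haveI : NeZero n := ⟨hn0⟩
  set I := Ideal.span {f} with hI
  have hmem : f ∈ I := Ideal.mem_span_singleton_self f
  have hset : cycDist I ∈ {w | ∃ g ∈ I, g ≠ 0 ∧ cycWt g = w} :=
    Nat.sInf_mem ⟨cycWt f, f, hmem, hf, rfl⟩
  obtain ⟨c, hcI, hc0, hcw⟩ := hset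
  obtain ⟨m, u, j, hu, hpiv, htri, hjU, hcard⟩ := greedy hn0 I c hcI hc0 Finset.univ
  have hn_le : n ≤ m * cycDist I := by
    have hcu : (Finset.univ : Finset (ZMod n)).card = n := by
      rw [Finset.card_univ, ZMod.card]
    rw [← hcw]
    rw [hcu] at hcard
    exact hcard
  haveI : FiniteDimensional F (CycRing F n) :=
    Module.Finite.of_basis (AdjoinRoot.powerBasis' (monic_X_pow_sub_C (1:F) hn0)).basis
  have hambient : LinearIndependent F u := by
    rw [Fintype.linearIndependent_iff]
    intro g hsum
    by_contra hg
    push_neg at hg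
    obtain ⟨t0, ht0⟩ := hg
    set Sne := Finset.univ.filter (fun t => g t ≠ 0) with hSne'
    have hSne : Sne.Nonempty := ⟨t0, by simp [hSne', ht0]⟩
    set t := Sne.max' hSne with ht
    have hgt : g t ≠ 0 := (Finset.mem_filter.mp (Sne.max'_mem hSne)).2
    have hsum2 := congrArg (coeffZL hn0 (j t)) hsum
    rw [map_sum, map_zero] at hsum2
    have hterm : ∀ i, coeffZL hn0 (j t) (g i • u i) = g i * coeffZ (u i) (j t) := by
      intro i
      rw [map_smul, coeffZL_apply]
      rfl
    rw [Finset.sum_congr rfl (fun i _ => hterm i)] at hsum2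
    have hsingle : g t * coeffZ (u t) (j t) = 0 := by
      rw [← hsum2]
      symm
      apply Finset.sum_eq_single_of_mem t (Finset.mem_univ t)
      intro i _ hit
      rcases lt_or_gt_of_ne hit with hlt | hgt'
      · rw [htri i t hlt, mul_zero]
      · have hgi : g i = 0 := by
          by_contra hgi
          have hiS : i ∈ Sne := Finset.mem_filter.mpr ⟨Finset.mem_univ i, hgi⟩
          exact absurd (Sne.le_max' i hiS) (not_le.mpr hgt')
        rw [hgi, zero_mul]
    rcases mul_eq_zero.mp hsingle with h | h
    · exact hgt h
    · exact hpiv t h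
  have hindep : LinearIndependent F
      (fun t : Fin m => (⟨u t, hu t⟩ : Submodule.restrictScalars F I)) :=
    LinearIndependent.of_comp (Submodule.restrictScalars F I).subtype hambient
  have hm : m ≤ cycDim F I := by
    have := hindep.fintype_card_le_finrank
    simpa [cycDim] using this
  calc n ≤ m * cycDist I := hn_le
    _ ≤ cycDim F I * cycDist I := Nat.mul_le_mul_right _ hm
    _ = cycDist I * cycDim F I := Nat.mul_comm _ _
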